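/- Fix 0 ≤ n ≤ N−1 and let (c_0, c_1, …, c_N) be the coefficient list of the twisted-polynomial product (τ − ⟦u⟧_{N−n}^{N−1}) ∘ ⋯ ∘ (τ − ⟦u⟧_{N−n}^{1}) ∘ (τ − ⟦u⟧_{N−n}^{0}). Then in F(t): ℓ · t^n / ∏_{k=0}^{N−1} (t − η^{q^k}) = (η^{q^{N−1}})^{n} · ∑_{i=0}^{N} c_i · ℓ^{q^i} · s_i(t). (Via the Anderson-motive description s(u) = ℓ·s_0 with τ^i s(u) = ℓ^{q^i} s_i, this is exactly the statement that the sign-normalized Hayes A-module ψ^u with ψ^u_{I_∞} = τ − u satisfies ψ^u_{T_n} = η^{n/q} · (τ − ⟦u⟧_{N−n}^{N−1}) ∘ ⋯ ∘ (τ − ⟦u⟧_{N−n}^{0}), where T_n = t^n/ρ(t).) -/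

import Mathlib

set_option maxHeartbeats 4000000 in
open Polynomial nonZeroDivisors in
/-- Explicit factorization of the sign-normalized Hayes module:
with `(c_0,…,c_N)` the coefficient list of
`(τ - ⟦u⟧_{N-n}^{N-1}) ∘ ⋯ ∘ (τ - ⟦u⟧_{N-n}^{0})`, one has in `F(t)`:
`ℓ·t^n/∏_{k<N}(t-η^{q^k}) = (η^{q^{N-1}})^n · ∑_{i≤N} c_i·ℓ^{q^i}·s_i(t)`. -/
theorem hayes_module_factorization
    (p q N : ℕ) (hp : Nat.Prime p) (hq : ∃ e : ℕ, 0 < e ∧ q = p ^ e)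
    (hN : 2 ≤ N)
    (F : Type*) [Field F] [CharP F p]
    (θ η : F) (hη : η ≠ 0) (hper : η ^ q ^ N = η)
    (hθη : ∀ a b : ℕ, θ ^ q ^ a ≠ η ^ q ^ b)
    (hθ : ∀ m : ℕ, 1 ≤ m → θ ^ q ^ m ≠ θ)
    (W : ℕ → ℕ) (hW : ∀ i, W i = (q ^ i - 1) / (q - 1))
    (u ℓ : F) (hu : u ≠ 0) (hℓ : ℓ ≠ 0)
    (hℓq : ℓ ^ (q - 1) = -u * (θ - η))
    (huW : u ^ W N = ∏ i ∈ Finset.range N, ((η ^ q ^ (N - 1 - i) - θ) ^ q ^ i)⁻¹)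
    -- G_i = ∏_{m<i} (θ - η^{q^{i-1-m}})^{(q-1)·q^m}
    (G : ℕ → F)
    (hG : ∀ i : ℕ, G i = ∏ m ∈ Finset.range i,
      (θ - η ^ q ^ (i - 1 - m)) ^ ((q - 1) * q ^ m))
    -- ⟦u⟧_l^i
    (B : ℕ → ℕ → F)
    (hB_lt : ∀ l i : ℕ, i < l → B l i = G i * u ^ q ^ i)
    (hB_ge : ∀ l i : ℕ, l ≤ i → B l i
      = θ * (η ^ (q ^ (i - 1) * (q - 1) * (i - l) + q ^ i))⁻¹ * G i * u ^ q ^ i)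
    (n : ℕ) (hn : n ≤ N - 1)
    -- coefficient lists of the iterated twisted-polynomial products
    -- (τ - a_{m-1}) ∘ ⋯ ∘ (τ - a_0) with a_i = ⟦u⟧_{N-n}^i
    (c : ℕ → ℕ → F)
    (hc0 : ∀ i : ℕ, c 0 i = if i = 0 then 1 else 0)
    (hcz : ∀ m : ℕ, c (m + 1) 0 = -B (N - n) m * c m 0)
    (hcs : ∀ m i : ℕ, c (m + 1) (i + 1) = (c m i) ^ q + (-B (N - n) m) * c m (i + 1))
    -- the twisted shtuka functions f^{(k)} and products s_i in F(t)
    (f : ℕ → RatFunc F)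
    (hf : ∀ k : ℕ, f k = (RatFunc.X - RatFunc.C (η ^ q ^ k))⁻¹
        - RatFunc.C ((θ ^ q ^ k - η ^ q ^ k)⁻¹))
    (s : ℕ → RatFunc F)
    (hs : ∀ i : ℕ, s i = ∏ k ∈ Finset.range i, f k) :
    RatFunc.C ℓ * RatFunc.X ^ n
        / (∏ k ∈ Finset.range N, (RatFunc.X - RatFunc.C (η ^ q ^ k)))
      = RatFunc.C ((η ^ q ^ (N - 1)) ^ n)
        * ∑ i ∈ Finset.range (N + 1), RatFunc.C (c N i * ℓ ^ q ^ i) * s i := by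
  classical
  obtain ⟨e, he, hqe⟩ := hq
  haveI : ExpChar F p := ExpChar.prime hp
  have hq2 : 2 ≤ q := by
    have h1 : 2 ≤ p := hp.two_le
    have h2 : p ≤ p ^ e := Nat.le_self_pow he.ne' p
    omega
  have hq1 : 1 ≤ q := by omega
  set l := N - n with hldef
  have hl1 : 1 ≤ l := by omega
  have hlN : l ≤ N := by omega
  have hNl : N - l = n := by omega
  -- nonvanishing
  have hηz : ∀ k : ℕ, (η : F) ^ k ≠ 0 := fun k => pow_ne_zero _ hη
  have hsub : ∀ a b : ℕ, θ ^ q ^ a - η ^ q ^ b ≠ 0 := fun a b => sub_ne_zero.mpr (hθη a b)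
  have hηθ : ∀ k : ℕ, η ^ q ^ k - θ ≠ 0 := by
    intro k
    have h := hθη 0 k
    rw [pow_zero, pow_one] at h
    exact sub_ne_zero.mpr fun hh => h hh.symm
  have hS : η - θ ≠ 0 := by
    have := hηθ 0
    rwa [pow_zero, pow_one] at this
  have hTS : θ - η ≠ 0 := sub_ne_zero.mpr fun h => (sub_ne_zero.mp hS) h.symm
  -- sign
  have hsign : (-1 : F) ^ (q - 1) = 1 := by
    rcases hp.eq_two_or_odd' with h2 | hodd
    · subst h2
      have h1 : (-1 : F) = 1 := by
        have := CharTwo.neg_eq (R := F) 1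
        simpa using this
      rw [h1, one_pow]
    · have hqodd : Odd q := by rw [hqe]; exact hodd.pow
      exact Even.neg_one_pow (Nat.Odd.sub_odd hqodd odd_one)
  have hsignθ : ∀ z : F, (θ - z) ^ (q - 1) = (z - θ) ^ (q - 1) := by
    intro z
    rw [show θ - z = -(z - θ) by ring, neg_pow, hsign, one_mul]
  -- Frobenius
  let ψ : F →+* F := iterateFrobenius F p e
  have hψ : ∀ x : F, ψ x = x ^ q := fun x => by rw [hqe]; exact iterateFrobenius_def ..
  have hfrobsub : ∀ x y : F, (x - y) ^ q = x ^ q - y ^ q := fun x y => by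
    rw [← hψ, ← hψ, ← hψ, map_sub]
  have hppow : ∀ (x : F) (k : ℕ), (x ^ q ^ k) ^ q = x ^ q ^ (k + 1) := fun x k => by
    rw [← pow_mul, ← pow_succ]
  -- RatFunc basics
  have hCinj : Function.Injective (RatFunc.C (K := F)) := RingHom.injective _
  have hCne : ∀ a : F, a ≠ 0 → RatFunc.C a ≠ 0 := fun a ha h =>
    ha (hCinj (h.trans (map_zero _).symm))
  have hXC : ∀ a : F, RatFunc.X - RatFunc.C a ≠ 0 := by
    intro a
    rw [← RatFunc.algebraMap_X, ← RatFunc.algebraMap_C, ← map_sub]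
    exact RatFunc.algebraMap_ne_zero (Polynomial.X_sub_C_ne_zero a)
  have hf' : ∀ k : ℕ, f k = (RatFunc.C (θ ^ q ^ k) - RatFunc.X)
      / ((RatFunc.X - RatFunc.C (η ^ q ^ k)) * RatFunc.C (θ ^ q ^ k - η ^ q ^ k)) := by
    intro k
    have hY := hXC (η ^ q ^ k)
    have hd := hCne _ (hsub k k)
    rw [eq_div_iff (mul_ne_zero hY hd), hf k, map_inv₀, sub_mul]
    rw [show (RatFunc.X - RatFunc.C (η ^ q ^ k))⁻¹
        * ((RatFunc.X - RatFunc.C (η ^ q ^ k)) * RatFunc.C (θ ^ q ^ k - η ^ q ^ k))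
        = RatFunc.C (θ ^ q ^ k - η ^ q ^ k) by
      rw [← mul_assoc, inv_mul_cancel₀ hY, one_mul]]
    rw [show (RatFunc.C (θ ^ q ^ k - η ^ q ^ k))⁻¹
        * ((RatFunc.X - RatFunc.C (η ^ q ^ k)) * RatFunc.C (θ ^ q ^ k - η ^ q ^ k))
        = RatFunc.X - RatFunc.C (η ^ q ^ k) by
      rw [mul_comm (RatFunc.X - RatFunc.C (η ^ q ^ k)), ← mul_assoc, inv_mul_cancel₀ hd, one_mul]]
    rw [map_sub]
    ring
  -- G recursion
  have hG0 : G 0 = 1 := by rw [hG]; simp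
  have hGrec : ∀ m : ℕ, G (m + 1) = G m ^ q * (θ - η ^ q ^ m) ^ (q - 1) := by
    intro m
    rw [hG (m + 1), hG m, Finset.prod_range_succ', ← Finset.prod_pow]
    congr 1
    · refine Finset.prod_congr rfl fun j hj => ?_
      rw [← pow_mul]
      have h1 : m + 1 - 1 - (j + 1) = m - 1 - j := by omega
      have h2 : (q - 1) * q ^ (j + 1) = (q - 1) * q ^ j * q := by rw [pow_succ]; ring
      rw [h1, h2]
    · have h1 : m + 1 - 1 - 0 = m := by omega
      rw [h1, pow_zero, mul_one]
  -- A and its recursions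
  let A : ℕ → F := fun m => Nat.rec (motive := fun _ => F) 1
    (fun m' Am => Am ^ q * (η ^ q ^ m' - θ) * ((η - θ) * (if l ≤ m' then η ^ q ^ m' else 1))⁻¹) m
  have hA0 : A 0 = 1 := rfl
  have hAsucc : ∀ m, A (m + 1)
      = A m ^ q * (η ^ q ^ m - θ) * ((η - θ) * (if l ≤ m then η ^ q ^ m else 1))⁻¹ :=
    fun m => rfl
  have hJne : ∀ m : ℕ, (η - θ) * (if l ≤ m then η ^ q ^ m else 1) ≠ 0 := by
    intro m
    refine mul_ne_zero hS ?_
    split <;> simp [hηz, hη]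
  have hAne : ∀ m, A m ≠ 0 := by
    intro m
    induction m with
    | zero => rw [hA0]; exact one_ne_zero
    | succ m ih =>
      rw [hAsucc]
      exact mul_ne_zero (mul_ne_zero (pow_ne_zero _ ih) (hηθ m)) (inv_ne_zero (hJne m))
  have hArec : ∀ m, A (m + 1) * ((η - θ) * (if l ≤ m then η ^ q ^ m else 1))
      = A m ^ q * (η ^ q ^ m - θ) := by
    intro m
    rw [hAsucc, inv_mul_cancel_right₀ (hJne m)]
  have hArec_lt : ∀ m, m < l → A (m + 1) * (η - θ) = A m ^ q * (η ^ q ^ m - θ) := by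
    intro m hm
    have := hArec m
    rwa [if_neg (by omega), mul_one] at this
  have hArec_ge : ∀ m, l ≤ m → A (m + 1) * (η - θ) * η ^ q ^ m = A m ^ q * (η ^ q ^ m - θ) := by
    intro m hm
    have := hArec m
    rwa [if_pos hm, ← mul_assoc] at this
  -- invariant R
  have hpq : ∀ x : F, x ^ q = x ^ (q - 1) * x := by
    intro x
    conv_lhs => rw [show q = q - 1 + 1 by omega]
    rw [pow_succ]
  have hR : ∀ m, A m ^ q * (η - θ) ^ q ^ m * η ^ (q ^ (m - 1) * (q - 1) * (m - l))
      = A m * G m * (η - θ) := by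
    intro m
    induction m with
    | zero =>
      rw [hA0, hG0]
      simp
    | succ m ih =>
      have h2' : G (m + 1) = G m ^ q * (η ^ q ^ m - θ) ^ (q - 1) := by
        rw [hGrec m, hsignθ]
      have hm1 : m + 1 - 1 = m := by omega
      rw [hm1]
      rcases Nat.lt_or_ge m l with hml | hml
      · have h1 := hArec_lt m hml
        have hml0 : m - l = 0 := by omega
        have hml0' : m + 1 - l = 0 := by omega
        have ih' : A m ^ q * (η - θ) ^ q ^ m = A m * G m * (η - θ) := by
          rw [hml0, mul_zero, pow_zero, mul_one] at ih
          exact ih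
        rw [hml0', mul_zero, pow_zero, mul_one]
        refine mul_right_cancel₀ (pow_ne_zero q hS) ?_
        calc A (m + 1) ^ q * (η - θ) ^ q ^ (m + 1) * (η - θ) ^ q
            = (A (m + 1) * (η - θ)) ^ q * ((η - θ) ^ q ^ m) ^ q := by
              rw [pow_succ q m, pow_mul, mul_pow (A (m + 1)) (η - θ) q]; ring
          _ = (A m ^ q * (η ^ q ^ m - θ)) ^ q * ((η - θ) ^ q ^ m) ^ q := by rw [h1]
          _ = (A m ^ q * (η - θ) ^ q ^ m) ^ q * (η ^ q ^ m - θ) ^ q := by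
              rw [mul_pow (A m ^ q) (η ^ q ^ m - θ) q,
                mul_pow (A m ^ q) ((η - θ) ^ q ^ m) q]
              ring
          _ = (A m * G m * (η - θ)) ^ q * (η ^ q ^ m - θ) ^ q := by rw [ih']
          _ = (A m ^ q * (η ^ q ^ m - θ)) * (G m ^ q * (η ^ q ^ m - θ) ^ (q - 1))
              * (η - θ) ^ q := by
              rw [mul_pow (A m * G m) (η - θ) q, mul_pow (A m) (G m) q,
                hpq (η ^ q ^ m - θ)]
              ring
          _ = (A (m + 1) * (η - θ)) * (G m ^ q * (η ^ q ^ m - θ) ^ (q - 1)) * (η - θ) ^ q := by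
              rw [h1]
          _ = A (m + 1) * G (m + 1) * (η - θ) * (η - θ) ^ q := by rw [h2']; ring
      · have h1 := hArec_ge m hml
        have hT' : q ^ m * (q - 1) * (m + 1 - l)
            = q ^ (m - 1) * (q - 1) * (m - l) * q + q ^ m * (q - 1) := by
          have h0 : m + 1 - l = (m - l) + 1 := by omega
          have hqm : q ^ m = q ^ (m - 1) * q := by
            rw [← pow_succ]; congr 1; omega
          rw [h0]
          calc q ^ m * (q - 1) * ((m - l) + 1)
              = (q ^ m * (q - 1) * (m - l)) + q ^ m * (q - 1) := by ring
            _ = q ^ (m - 1) * (q - 1) * (m - l) * q + q ^ m * (q - 1) := by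
                rw [hqm]; ring
        have hsplit : q ^ m * q = q ^ m + q ^ m * (q - 1) := by
          have h5 : 1 + (q - 1) = q := by omega
          calc q ^ m * q = q ^ m * (1 + (q - 1)) := by rw [h5]
            _ = q ^ m + q ^ m * (q - 1) := by ring
        rw [hT', pow_add η (q ^ (m - 1) * (q - 1) * (m - l) * q) (q ^ m * (q - 1))]
        refine mul_right_cancel₀ (mul_ne_zero (pow_ne_zero q hS) (hηz (q ^ m * q))) ?_
        calc A (m + 1) ^ q * (η - θ) ^ q ^ (m + 1)
              * (η ^ (q ^ (m - 1) * (q - 1) * (m - l) * q) * η ^ (q ^ m * (q - 1)))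
              * ((η - θ) ^ q * η ^ (q ^ m * q))
            = (A (m + 1) * (η - θ) * η ^ q ^ m) ^ q * ((η - θ) ^ q ^ m) ^ q
              * (η ^ (q ^ (m - 1) * (q - 1) * (m - l))) ^ q * η ^ (q ^ m * (q - 1)) := by
              rw [pow_succ q m, pow_mul ((η : F) - θ) (q ^ m) q,
                pow_mul (η : F) (q ^ (m - 1) * (q - 1) * (m - l)) q,
                pow_mul (η : F) (q ^ m) q,
                mul_pow (A (m + 1) * (η - θ)) (η ^ q ^ m) q,
                mul_pow (A (m + 1)) (η - θ) q]
              ring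
          _ = (A m ^ q * (η ^ q ^ m - θ)) ^ q * ((η - θ) ^ q ^ m) ^ q
              * (η ^ (q ^ (m - 1) * (q - 1) * (m - l))) ^ q * η ^ (q ^ m * (q - 1)) := by
              rw [h1]
          _ = (A m ^ q * (η - θ) ^ q ^ m * η ^ (q ^ (m - 1) * (q - 1) * (m - l))) ^ q
              * (η ^ q ^ m - θ) ^ q * η ^ (q ^ m * (q - 1)) := by
              rw [mul_pow (A m ^ q) (η ^ q ^ m - θ) q,
                mul_pow (A m ^ q * (η - θ) ^ q ^ m) (η ^ (q ^ (m - 1) * (q - 1) * (m - l))) q,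
                mul_pow (A m ^ q) ((η - θ) ^ q ^ m) q]
              ring
          _ = (A m * G m * (η - θ)) ^ q * (η ^ q ^ m - θ) ^ q * η ^ (q ^ m * (q - 1)) := by
              rw [ih]
          _ = (A m ^ q * (η ^ q ^ m - θ)) * (G m ^ q * (η ^ q ^ m - θ) ^ (q - 1))
              * (η - θ) ^ q * η ^ (q ^ m * (q - 1)) := by
              rw [mul_pow (A m * G m) (η - θ) q, mul_pow (A m) (G m) q,
                hpq (η ^ q ^ m - θ)]
              ring
          _ = (A (m + 1) * (η - θ) * η ^ q ^ m) * (G m ^ q * (η ^ q ^ m - θ) ^ (q - 1))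
              * (η - θ) ^ q * η ^ (q ^ m * (q - 1)) := by rw [h1]
          _ = A (m + 1) * G (m + 1) * (η - θ) * ((η - θ) ^ q * η ^ (q ^ m * q)) := by
              rw [h2', hsplit, pow_add η (q ^ m) (q ^ m * (q - 1))]; ring
  -- E, D and invariant V
  let E : ℕ → ℕ := fun m => ∑ k ∈ Finset.range m, q ^ k
  let D : ℕ → F := fun m => ∏ k ∈ Finset.range m, (η ^ q ^ k - θ) ^ q ^ (m - 1 - k)
  have hErec : ∀ m, E (m + 1) = q * E m + 1 := by
    intro m
    show (∑ k ∈ Finset.range (m + 1), q ^ k) = q * (∑ k ∈ Finset.range m, q ^ k) + 1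
    rw [Finset.sum_range_succ', pow_zero, Finset.mul_sum]
    congr 1
    exact Finset.sum_congr rfl fun k _ => by rw [pow_succ, mul_comm]
  have hDrec : ∀ m, D (m + 1) = D m ^ q * (η ^ q ^ m - θ) := by
    intro m
    show (∏ k ∈ Finset.range (m + 1), (η ^ q ^ k - θ) ^ q ^ (m + 1 - 1 - k))
        = (∏ k ∈ Finset.range m, (η ^ q ^ k - θ) ^ q ^ (m - 1 - k)) ^ q * (η ^ q ^ m - θ)
    rw [Finset.prod_range_succ, ← Finset.prod_pow]
    congr 1
    · refine Finset.prod_congr rfl fun k hk => ?_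
      have hk' : k < m := Finset.mem_range.mp hk
      rw [← pow_mul, ← pow_succ]
      have h3 : m + 1 - 1 - k = m - 1 - k + 1 := by omega
      rw [h3]
    · have h1 : m + 1 - 1 - m = 0 := by omega
      rw [h1, pow_zero, pow_one]
  have hV : ∀ m, A m * (η - θ) ^ E m * η ^ ((m - l) * q ^ (m - 1)) = D m := by
    intro m
    induction m with
    | zero =>
      show A 0 * (η - θ) ^ (∑ k ∈ Finset.range 0, q ^ k) * η ^ ((0 - l) * q ^ (0 - 1))
          = ∏ k ∈ Finset.range 0, (η ^ q ^ k - θ) ^ q ^ (0 - 1 - k)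
      rw [hA0]
      simp
    | succ m ih =>
      rw [hErec m, hDrec m, ← ih]
      have hm1 : m + 1 - 1 = m := by omega
      rw [hm1]
      rcases Nat.lt_or_ge m l with hml | hml
      · have h0 : m + 1 - l = 0 := by omega
        have h1 : m - l = 0 := by omega
        have harec := hArec_lt m hml
        simp only [h0, h1, zero_mul, pow_zero, mul_one]
        rw [mul_pow (A m) ((η - θ) ^ E m) q]
        linear_combination ((η - θ) ^ (q * E m)) * harec
      · have harec := hArec_ge m hml
        have h0 : m + 1 - l = (m - l) + 1 := by omega
        have hqm : q ^ m = q ^ (m - 1) * q := by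
          rw [← pow_succ]; congr 1; omega
        have h2 : (m + 1 - l) * q ^ m = (m - l) * q ^ (m - 1) * q + q ^ m := by
          rw [h0, hqm]; ring
        rw [h2, pow_add η ((m - l) * q ^ (m - 1) * q) (q ^ m)]
        rw [mul_pow (A m * (η - θ) ^ E m) (η ^ ((m - l) * q ^ (m - 1))) q,
          mul_pow (A m) ((η - θ) ^ E m) q]
        linear_combination ((η - θ) ^ (q * E m) * η ^ ((m - l) * q ^ (m - 1) * q)) * harec
  have hgeom : ∀ M, (q - 1) * E M + 1 = q ^ M := by
    intro M
    induction M with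
    | zero =>
      show (q - 1) * (∑ k ∈ Finset.range 0, q ^ k) + 1 = 1
      simp
    | succ M ih =>
      rw [hErec M, pow_succ]
      calc (q - 1) * (q * E M + 1) + 1
          = (q - 1) * q * E M + ((q - 1) + 1) := by ring
        _ = (q - 1) * q * E M + q := by omega
        _ = q * ((q - 1) * E M + 1) := by ring
        _ = q ^ M * q := by rw [ih]; ring
  have hWE : W N = E N := by
    rw [hW N]
    have h := hgeom N
    have h1 : q ^ N - 1 = (q - 1) * E N := by omega
    rw [h1, Nat.mul_div_cancel_left _ (by omega : 0 < q - 1)]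
  have hDN : D N * u ^ E N = 1 := by
    have hDne : D N ≠ 0 := Finset.prod_ne_zero_iff.mpr fun k _ => pow_ne_zero _ (hηθ k)
    have h2 : (∏ i ∈ Finset.range N, (η ^ q ^ (N - 1 - i) - θ) ^ q ^ i)
        = ∏ k ∈ Finset.range N, (η ^ q ^ k - θ) ^ q ^ (N - 1 - k) := by
      rw [← Finset.prod_range_reflect (fun k => (η ^ q ^ k - θ) ^ q ^ (N - 1 - k)) N]
      refine Finset.prod_congr rfl fun i hi => ?_
      have hi' : i < N := Finset.mem_range.mp hi
      have h3 : N - 1 - (N - 1 - i) = i := by omega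
      rw [h3]
    have h4 : u ^ E N = (D N)⁻¹ := by
      rw [← hWE, huW, Finset.prod_inv_distrib, h2]
    rw [h4, mul_inv_cancel₀ hDne]
  have hlq' : ℓ ^ q = ℓ * (u * (η - θ)) := by
    have h1 : q - 1 + 1 = q := by omega
    rw [← h1, pow_succ, hℓq]
    ring
  have hlpow : ∀ m, ℓ ^ q ^ (m + 1) = ℓ ^ q ^ m * (u ^ q ^ m * (η - θ) ^ q ^ m) := by
    intro m
    rw [← hppow ℓ m, ← mul_pow, ← mul_pow]
    rw [← hlq']
    rw [← pow_mul, ← pow_mul, mul_comm q (q ^ m)]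
  -- Frobenius on RatFunc
  let φP : F[X] →+* F[X] := Polynomial.mapRingHom ψ
  have hinj : Function.Injective φP := Polynomial.map_injective ψ ψ.injective
  have hcomap : F[X]⁰ ≤ (F[X]⁰).comap φP := by
    intro x hx
    simp only [Submonoid.mem_comap]
    rw [mem_nonZeroDivisors_iff_ne_zero] at hx ⊢
    exact fun h => hx (hinj (by simpa using h))
  let Φ : RatFunc F →+* RatFunc F := RatFunc.mapRingHom φP hcomap
  have hΦa : ∀ P : F[X], Φ (algebraMap _ _ P) = algebraMap _ _ (φP P) := by
    intro P
    have := RatFunc.map_apply_div (K := F) φP hcomap P 1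
    simp only [map_one, div_one] at this
    exact this
  have hΦX : Φ RatFunc.X = RatFunc.X := by
    rw [← RatFunc.algebraMap_X, hΦa]
    simp [φP, RatFunc.algebraMap_X]
  have hΦC : ∀ a : F, Φ (RatFunc.C a) = RatFunc.C (a ^ q) := by
    intro a
    rw [← RatFunc.algebraMap_C, hΦa]
    simp [φP, RatFunc.algebraMap_C, hψ]
  have hΦf : ∀ k : ℕ, Φ (f k) = f (k + 1) := by
    intro k
    rw [hf k, hf (k + 1), map_sub, map_inv₀, map_sub, hΦX, hΦC, hΦC, hppow]
    rw [inv_pow, hfrobsub, hppow, hppow]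
  have hΦs : ∀ i : ℕ, f 0 * Φ (s i) = s (i + 1) := by
    intro i
    rw [hs i, hs (i + 1), map_prod]
    rw [Finset.prod_range_succ']
    rw [Finset.prod_congr rfl fun k _ => hΦf k]
    ring
  -- c vanishing
  have hczero : ∀ m i, m < i → c m i = 0 := by
    intro m
    induction m with
    | zero => intro i hi; rw [hc0, if_neg (by omega : ¬ i = 0)]
    | succ m ih =>
      intro i hi
      match i, hi with
      | i + 1, hi =>
        rw [hcs, ih i (by omega), ih (i + 1) (by omega)]
        simp [zero_pow (by omega : q ≠ 0)]
  -- the partial sums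
  let g : ℕ → RatFunc F := fun m => ∑ i ∈ Finset.range (N + 1), RatFunc.C (c m i * ℓ ^ q ^ i) * s i
  have hgrec : ∀ m, m < N → g (m + 1) = f 0 * Φ (g m) - RatFunc.C (B l m) * g m := by
    intro m hm
    have hΦg : Φ (g m) = ∑ i ∈ Finset.range (N + 1),
        RatFunc.C ((c m i * ℓ ^ q ^ i) ^ q) * Φ (s i) := by
      show Φ (∑ i ∈ Finset.range (N + 1), RatFunc.C (c m i * ℓ ^ q ^ i) * s i) = _
      rw [map_sum]
      exact Finset.sum_congr rfl fun i _ => by rw [map_mul, hΦC]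
    have h1 : ∀ i : ℕ, f 0 * (RatFunc.C ((c m i * ℓ ^ q ^ i) ^ q) * Φ (s i))
        = RatFunc.C (c m i ^ q * ℓ ^ q ^ (i + 1)) * s (i + 1) := by
      intro i
      rw [← hΦs i, mul_pow, hppow]
      ring
    have h2 : f 0 * Φ (g m)
        = ∑ i ∈ Finset.range (N + 1), RatFunc.C (c m i ^ q * ℓ ^ q ^ (i + 1)) * s (i + 1) := by
      rw [hΦg, Finset.mul_sum]
      exact Finset.sum_congr rfl fun i _ => h1 i
    have h3 : RatFunc.C (B l m) * g m
        = ∑ i ∈ Finset.range (N + 1), RatFunc.C (B l m * (c m i * ℓ ^ q ^ i)) * s i := by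
      show RatFunc.C (B l m) * (∑ i ∈ Finset.range (N + 1), RatFunc.C (c m i * ℓ ^ q ^ i) * s i) = _
      rw [Finset.mul_sum]
      exact Finset.sum_congr rfl fun i _ => by rw [← mul_assoc, ← map_mul]
    rw [h2, h3]
    -- drop the top term of the first sum
    have h4 : (∑ i ∈ Finset.range (N + 1), RatFunc.C (c m i ^ q * ℓ ^ q ^ (i + 1)) * s (i + 1))
        = ∑ i ∈ Finset.range N, RatFunc.C (c m i ^ q * ℓ ^ q ^ (i + 1)) * s (i + 1) := by
      rw [Finset.sum_range_succ, hczero m N hm]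
      simp [zero_pow (by omega : q ≠ 0)]
    rw [h4]
    show (∑ i ∈ Finset.range (N + 1), RatFunc.C (c (m + 1) i * ℓ ^ q ^ i) * s i) = _
    rw [Finset.sum_range_succ' (fun i => RatFunc.C (c (m + 1) i * ℓ ^ q ^ i) * s i) N,
      Finset.sum_range_succ' (fun i => RatFunc.C (B l m * (c m i * ℓ ^ q ^ i)) * s i) N]
    have h5 : ∀ i : ℕ, RatFunc.C (c (m + 1) (i + 1) * ℓ ^ q ^ (i + 1)) * s (i + 1)
        = RatFunc.C (c m i ^ q * ℓ ^ q ^ (i + 1)) * s (i + 1)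
          - RatFunc.C (B l m * (c m (i + 1) * ℓ ^ q ^ (i + 1))) * s (i + 1) := by
      intro i
      rw [← sub_mul, ← map_sub]
      congr 2
      rw [hcs m i]
      ring
    have h6 : RatFunc.C (c (m + 1) 0 * ℓ ^ q ^ 0) * s 0
        = -(RatFunc.C (B l m * (c m 0 * ℓ ^ q ^ 0)) * s 0) := by
      rw [← neg_mul, ← map_neg]
      congr 2
      rw [hcz m]
      ring
    rw [Finset.sum_congr rfl fun i _ => h5 i, h6, Finset.sum_sub_distrib]
    ring
  -- products
  let Pr : ℕ → RatFunc F := fun m => ∏ k ∈ Finset.range m, (RatFunc.X - RatFunc.C (η ^ q ^ k))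
  let Qr : ℕ → RatFunc F := fun m => ∏ k ∈ Finset.range m, (RatFunc.X - RatFunc.C (η ^ q ^ (k + 1)))
  have hPrne : ∀ m, Pr m ≠ 0 := fun m => Finset.prod_ne_zero_iff.mpr fun k _ => hXC _
  have hQrne : ∀ m, Qr m ≠ 0 := fun m => Finset.prod_ne_zero_iff.mpr fun k _ => hXC _
  have hΦPr : ∀ m, Φ (Pr m) = Qr m := by
    intro m
    rw [map_prod]
    exact Finset.prod_congr rfl fun k _ => by rw [map_sub, hΦX, hΦC, hppow]
  have hrel : ∀ m, Pr m * (RatFunc.X - RatFunc.C (η ^ q ^ m))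
      = (RatFunc.X - RatFunc.C (η ^ q ^ 0)) * Qr m := by
    intro m
    rw [show Pr m * (RatFunc.X - RatFunc.C (η ^ q ^ m)) = Pr (m + 1) from
      (Finset.prod_range_succ _ m).symm]
    show (∏ k ∈ Finset.range (m + 1), (RatFunc.X - RatFunc.C (η ^ q ^ k))) = _
    rw [Finset.prod_range_succ']
    exact mul_comm _ _
  -- main induction
  have hθ0 : θ ^ q ^ 0 = θ := by rw [pow_zero, pow_one]
  have hη0 : η ^ q ^ 0 = η := by rw [pow_zero, pow_one]
  have hf0 : f 0 = (RatFunc.C θ - RatFunc.X)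
      / ((RatFunc.X - RatFunc.C η) * RatFunc.C (θ - η)) := by
    rw [hf' 0, hθ0, hη0]
  have main : ∀ m, m ≤ N →
      g m = RatFunc.C (A m * ℓ ^ q ^ m) * RatFunc.X ^ (m - l) / Pr m := by
    intro m
    induction m with
    | zero =>
      intro _
      show (∑ i ∈ Finset.range (N + 1), RatFunc.C (c 0 i * ℓ ^ q ^ i) * s i) = _
      rw [Finset.sum_eq_single 0]
      · rw [hc0 0, if_pos rfl, hA0, hs 0, Finset.prod_range_zero]
        show RatFunc.C (1 * ℓ ^ q ^ 0) * 1
            = RatFunc.C (1 * ℓ ^ q ^ 0) * RatFunc.X ^ (0 - l)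
              / ∏ k ∈ Finset.range 0, (RatFunc.X - RatFunc.C (η ^ q ^ k))
        rw [Finset.prod_range_zero, Nat.zero_sub, div_one]
        simp
      · intro i _ hi
        rw [hc0 i, if_neg hi, zero_mul, map_zero, zero_mul]
      · intro h
        exact absurd (Finset.mem_range.mpr (by omega)) h
    | succ m ih =>
      intro hm1
      have hmN : m < N := by omega
      have IH := ih (by omega)
      rw [hgrec m hmN, IH]
      have hΦval : Φ (RatFunc.C (A m * ℓ ^ q ^ m) * RatFunc.X ^ (m - l) / Pr m)
          = RatFunc.C ((A m * ℓ ^ q ^ m) ^ q) * RatFunc.X ^ (m - l) / Qr m := by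
        rw [map_div₀, map_mul, map_pow, hΦX, hΦC, hΦPr]
      rw [hΦval]
      have hrel' : Pr m * (RatFunc.X - RatFunc.C (η ^ q ^ m))
          = (RatFunc.X - RatFunc.C η) * Qr m := by
        have h := hrel m
        rwa [hη0] at h
      have hPr1 : Pr (m + 1) = Pr m * (RatFunc.X - RatFunc.C (η ^ q ^ m)) :=
        Finset.prod_range_succ _ m
      -- the numerator identity
      have hnum : (RatFunc.C θ - RatFunc.X) * RatFunc.C ((A m * ℓ ^ q ^ m) ^ q)
            * RatFunc.X ^ (m - l)
          - RatFunc.C (B l m * (A m * ℓ ^ q ^ m)) * RatFunc.C (θ - η) * RatFunc.X ^ (m - l)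
            * (RatFunc.X - RatFunc.C (η ^ q ^ m))
          = RatFunc.C (A (m + 1) * ℓ ^ q ^ (m + 1)) * RatFunc.C (θ - η)
            * RatFunc.X ^ (m + 1 - l) := by
        rcases Nat.lt_or_ge m l with hml | hml
        · -- phase 1
          have hd0 : m - l = 0 := by omega
          have hd0' : m + 1 - l = 0 := by omega
          have hBv := hB_lt l m hml
          have ihR' : A m ^ q * (η - θ) ^ q ^ m = A m * G m * (η - θ) := by
            have h := hR m
            rwa [hd0, mul_zero, pow_zero, mul_one] at h
          have harec := hArec_lt m hml
          have hS1 : (A m * ℓ ^ q ^ m) ^ q + B l m * (A m * ℓ ^ q ^ m) * (θ - η) = 0 := by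
            rw [hBv, mul_pow (A m) (ℓ ^ q ^ m) q, hppow, hlpow m]
            linear_combination (ℓ ^ q ^ m * u ^ q ^ m) * ihR'
          have hS2 : θ * (A m * ℓ ^ q ^ m) ^ q
              + B l m * (A m * ℓ ^ q ^ m) * ((θ - η) * η ^ q ^ m)
              = A (m + 1) * ℓ ^ q ^ (m + 1) * (θ - η) := by
            rw [hBv, mul_pow (A m) (ℓ ^ q ^ m) q, hppow, hlpow m]
            linear_combination (ℓ ^ q ^ m * u ^ q ^ m * η ^ q ^ m) * ihR'
              + (ℓ ^ q ^ m * u ^ q ^ m * (η - θ) ^ q ^ m) * harec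
          have hC1 : RatFunc.C ((A m * ℓ ^ q ^ m) ^ q)
              + RatFunc.C (B l m * (A m * ℓ ^ q ^ m)) * RatFunc.C (θ - η) = 0 := by
            rw [← map_mul, ← map_add, hS1, map_zero]
          have hC2 : RatFunc.C θ * RatFunc.C ((A m * ℓ ^ q ^ m) ^ q)
              + RatFunc.C (B l m * (A m * ℓ ^ q ^ m))
                * (RatFunc.C (θ - η) * RatFunc.C (η ^ q ^ m))
              = RatFunc.C (A (m + 1) * ℓ ^ q ^ (m + 1)) * RatFunc.C (θ - η) := by
            rw [← map_mul, ← map_mul, ← map_mul, ← map_mul, ← map_add, hS2]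
          rw [hd0, hd0', pow_zero]
          linear_combination hC2 - RatFunc.X * hC1
        · -- phase 2
          have hd1' : m + 1 - l = (m - l) + 1 := by omega
          have hBv := hB_ge l m hml
          have hBmul : B l m * η ^ (q ^ (m - 1) * (q - 1) * (m - l)) * η ^ q ^ m
              = θ * G m * u ^ q ^ m := by
            rw [hBv, pow_add]
            field_simp
          have ihR := hR m
          have harec := hArec_ge m hml
          have hS1 : θ * (A m * ℓ ^ q ^ m) ^ q
              + B l m * (A m * ℓ ^ q ^ m) * ((θ - η) * η ^ q ^ m) = 0 := by
            refine mul_right_cancel₀ (mul_ne_zero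
              (hηz (q ^ (m - 1) * (q - 1) * (m - l))) (hηz (q ^ m))) ?_
            rw [mul_pow (A m) (ℓ ^ q ^ m) q, hppow, hlpow m, zero_mul]
            linear_combination (θ * η ^ q ^ m * ℓ ^ q ^ m * u ^ q ^ m) * ihR
              + (A m * ℓ ^ q ^ m * (θ - η) * η ^ q ^ m) * hBmul
          have hS2 : (A m * ℓ ^ q ^ m) ^ q + B l m * (A m * ℓ ^ q ^ m) * (θ - η)
              = -(A (m + 1) * ℓ ^ q ^ (m + 1) * (θ - η)) := by
            refine mul_right_cancel₀ (mul_ne_zero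
              (hηz (q ^ (m - 1) * (q - 1) * (m - l))) (hηz (q ^ m))) ?_
            rw [mul_pow (A m) (ℓ ^ q ^ m) q, hppow, hlpow m]
            linear_combination (θ * ℓ ^ q ^ m * u ^ q ^ m) * ihR
              + (A m * ℓ ^ q ^ m * (θ - η)) * hBmul
              - (ℓ ^ q ^ m * u ^ q ^ m * (η - θ) ^ q ^ m
                  * η ^ (q ^ (m - 1) * (q - 1) * (m - l))) * harec
          have hC1 : RatFunc.C θ * RatFunc.C ((A m * ℓ ^ q ^ m) ^ q)
              + RatFunc.C (B l m * (A m * ℓ ^ q ^ m))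
                * (RatFunc.C (θ - η) * RatFunc.C (η ^ q ^ m)) = 0 := by
            rw [← map_mul, ← map_mul, ← map_mul, ← map_add, hS1, map_zero]
          have hC2 : RatFunc.C ((A m * ℓ ^ q ^ m) ^ q)
              + RatFunc.C (B l m * (A m * ℓ ^ q ^ m)) * RatFunc.C (θ - η)
              = -(RatFunc.C (A (m + 1) * ℓ ^ q ^ (m + 1)) * RatFunc.C (θ - η)) := by
            rw [← map_mul, ← map_mul, ← map_add, ← map_neg, hS2]
          rw [hd1', pow_succ RatFunc.X (m - l)]
          linear_combination (RatFunc.X ^ (m - l)) * hC1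
            - (RatFunc.X ^ (m - l) * RatFunc.X) * hC2
      -- assemble the fractions
      rw [hf0]
      rw [div_mul_div_comm]
      have hB2 : RatFunc.C (B l m) * (RatFunc.C (A m * ℓ ^ q ^ m) * RatFunc.X ^ (m - l) / Pr m)
          = RatFunc.C (B l m * (A m * ℓ ^ q ^ m)) * RatFunc.X ^ (m - l) / Pr m := by
        rw [map_mul RatFunc.C (B l m) (A m * ℓ ^ q ^ m)]
        ring
      rw [hB2]
      have hD1 : (RatFunc.X - RatFunc.C η) * RatFunc.C (θ - η) * Qr m ≠ 0 :=
        mul_ne_zero (mul_ne_zero (hXC η) (hCne _ hTS)) (hQrne m)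
      rw [div_sub_div _ _ hD1 (hPrne m),
        div_eq_div_iff (mul_ne_zero hD1 (hPrne m)) (hPrne (m + 1)), hPr1]
      linear_combination (Pr m ^ 2 * (RatFunc.X - RatFunc.C (η ^ q ^ m))) * hnum
        + (RatFunc.C (θ - η) * RatFunc.C (B l m * (A m * ℓ ^ q ^ m)) * RatFunc.X ^ (m - l)
            * (RatFunc.X - RatFunc.C (η ^ q ^ m)) * Pr m
          + RatFunc.C (A (m + 1) * ℓ ^ q ^ (m + 1)) * RatFunc.C (θ - η)
            * RatFunc.X ^ (m + 1 - l) * Pr m) * hrel'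
  -- conclusion
  have hfinal : (η ^ q ^ (N - 1)) ^ n * (A N * ℓ ^ q ^ N) = ℓ := by
    have hVN := hV N
    have hlEN : ℓ ^ q ^ N = ℓ * (u ^ E N * (η - θ) ^ E N) := by
      have h1 : q ^ N = (q - 1) * E N + 1 := (hgeom N).symm
      calc ℓ ^ q ^ N = ℓ ^ ((q - 1) * E N + 1) := by rw [← h1]
        _ = (ℓ ^ (q - 1)) ^ E N * ℓ := by rw [pow_add, pow_mul, pow_one]
        _ = (u * (η - θ)) ^ E N * ℓ := by
            rw [hℓq, show -u * (θ - η) = u * (η - θ) from by ring]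
        _ = ℓ * (u ^ E N * (η - θ) ^ E N) := by rw [mul_pow]; ring
    have hηn : (η ^ q ^ (N - 1)) ^ n = η ^ ((N - l) * q ^ (N - 1)) := by
      rw [← pow_mul, hNl]
      congr 1
      ring
    calc (η ^ q ^ (N - 1)) ^ n * (A N * ℓ ^ q ^ N)
        = A N * (η - θ) ^ E N * η ^ ((N - l) * q ^ (N - 1)) * u ^ E N * ℓ := by
          rw [hηn, hlEN]; ring
      _ = D N * u ^ E N * ℓ := by rw [hVN]
      _ = ℓ := by rw [hDN, one_mul]
  have hgN := main N le_rfl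
  rw [hNl] at hgN
  show RatFunc.C ℓ * RatFunc.X ^ n / Pr N = RatFunc.C ((η ^ q ^ (N - 1)) ^ n) * g N
  rw [hgN, ← mul_div_assoc, ← mul_assoc, ← map_mul, hfinal]
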